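/- Let d ≥ 1 be odd, n ≥ 1, and let M be an isotropic submodule of the discrete phase space V. Then the canonical stabilizer state ρ(M) is Hermitian, positive semidefinite, has trace 1, and satisfies ρ(M) * ρ(M) = ((Nat.card M : ℂ) / d^n) • ρ(M); moreover Matrix.rank ρ(M) * Nat.card M = d^n. In particular ρ(M) is (Nat.card M / d^n) times an orthogonal projection of rank d^n / Nat.card M, so it is a density matrix. -/

import Mathlib

open scoped BigOperators
open ComplexOrder

open Matrix
set_option linter.unusedSectionVars false
set_option linter.unusedVariables false
set_option linter.unusedTactic false

/-- The discrete phase space for `n` particles with local dimension `d`. -/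
abbrev PhaseSpace (d n : ℕ) : Type := (Fin n → ZMod d) × (Fin n → ZMod d)

/-- The symplectic form on the discrete phase space. -/
def symp {d n : ℕ} (v w : PhaseSpace d n) : ZMod d :=
  ∑ i, (v.1 i * w.2 i - v.2 i * w.1 i)

lemma symp_add_left {d n : ℕ} (a b w : PhaseSpace d n) :
    symp (a + b) w = symp a w + symp b w := by
  simp only [symp, Prod.fst_add, Prod.snd_add, Pi.add_apply, ← Finset.sum_add_distrib]
  exact Finset.sum_congr rfl fun i _ => by ring

lemma symp_smul_left {d n : ℕ} (c : ZMod d) (a w : PhaseSpace d n) :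
    symp (c • a) w = c * symp a w := by
  simp only [symp, Prod.smul_fst, Prod.smul_snd, Pi.smul_apply, smul_eq_mul, Finset.mul_sum]
  exact Finset.sum_congr rfl fun i _ => by ring

/-- The symplectic complement `M^ω` of a submodule of phase space. -/
def sympCompl {d n : ℕ} (M : Submodule (ZMod d) (PhaseSpace d n)) :
    Submodule (ZMod d) (PhaseSpace d n) where
  carrier := {v | ∀ m ∈ M, symp v m = 0}
  zero_mem' := by
    intro m _
    simp [symp]
  add_mem' := by
    intro a b ha hb m hm
    rw [Set.mem_setOf_eq] at ha hb
    show symp _ m = 0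
    rw [symp_add_left, ha m hm, hb m hm, add_zero]
  smul_mem' := by
    intro c a ha m hm
    rw [Set.mem_setOf_eq] at ha
    show symp _ m = 0
    rw [symp_smul_left, ha m hm, mul_zero]

/-- The character `χ` of `ZMod d`. -/
noncomputable def chi (d : ℕ) (x : ZMod d) : ℂ :=
  Complex.exp (2 * (Real.pi : ℂ) * Complex.I * (x.val : ℂ) / (d : ℂ))

/-- The phase `τ`. -/
noncomputable def tau (d : ℕ) (R : ℤ) : ℂ :=
  Complex.exp (2 * (Real.pi : ℂ) * Complex.I * ((d : ℂ) ^ 2 + 1) * (R : ℂ) / (2 * (d : ℂ)))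

/-- The Weyl operator of a phase-space point. -/
noncomputable def weyl (d n : ℕ) (v : PhaseSpace d n) :
    Matrix (Fin n → ZMod d) (Fin n → ZMod d) ℂ :=
  Matrix.of fun x y =>
    ∏ i, tau d (-(((v.1 i).val : ℤ) * ((v.2 i).val : ℤ))) * chi d (v.1 i * x i) *
      (if y i = x i - v.2 i then (1 : ℂ) else 0)

/-- The canonical stabilizer state `ρ(M)` of an isotropic submodule (for odd `d`). -/
noncomputable def stabState (d n : ℕ) [NeZero d]
    (M : Submodule (ZMod d) (PhaseSpace d n)) :
    Matrix (Fin n → ZMod d) (Fin n → ZMod d) ℂ :=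
  (d : ℂ) ^ (-(n : ℤ)) •
    ∑ m ∈ (Set.toFinite (M : Set (PhaseSpace d n))).toFinset, weyl d n m


noncomputable def ze (d : ℕ) (m : ℤ) : ℂ :=
  Complex.exp (2 * (Real.pi : ℂ) * Complex.I * (m : ℂ) / (d : ℂ))

variable {d : ℕ} [NeZero d]

lemma dC_ne : (d:ℂ) ≠ 0 := Nat.cast_ne_zero.2 (NeZero.ne d)

lemma ze_add (a b : ℤ) : ze d (a + b) = ze d a * ze d b := by
  rw [ze, ze, ze, ← Complex.exp_add]
  congr 1
  have := dC_ne (d := d)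
  field_simp
  push_cast
  ring

lemma ze_zero : ze d 0 = 1 := by simp [ze]

lemma ze_ne_zero (a : ℤ) : ze d a ≠ 0 := Complex.exp_ne_zero _

lemma ze_neg (a : ℤ) : ze d (-a) = (ze d a)⁻¹ := by
  have h : ze d (-a) * ze d a = 1 := by rw [← ze_add]; simp [ze_zero]
  field_simp [ze_ne_zero] at h ⊢
  linear_combination h

lemma ze_dvd (m : ℤ) (h : (d:ℤ) ∣ m) : ze d m = 1 := by
  obtain ⟨k, rfl⟩ := h
  rw [ze, Complex.exp_eq_one_iff]
  refine ⟨k, ?_⟩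
  have := dC_ne (d := d)
  push_cast
  field_simp

lemma ze_eq_one_iff (m : ℤ) : ze d m = 1 ↔ (d:ℤ) ∣ m := by
  refine ⟨?_, ze_dvd m⟩
  rw [ze, Complex.exp_eq_one_iff]
  rintro ⟨k, hk⟩
  have hd := dC_ne (d := d)
  have hπ : (Real.pi:ℂ) ≠ 0 := by exact_mod_cast Real.pi_ne_zero
  have hI := Complex.I_ne_zero
  refine ⟨k, ?_⟩
  have : (m:ℂ) = d * k := by
    field_simp at hk
    have h2 : (2:ℂ)*Real.pi*Complex.I ≠ 0 := by simp [hπ, hI]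
    apply mul_left_cancel₀ h2
    linear_combination (2*(Real.pi:ℂ)*Complex.I) * hk
  exact_mod_cast this

lemma ze_congr {a b : ℤ} (h : (a : ZMod d) = (b : ZMod d)) : ze d a = ze d b := by
  rw [ZMod.intCast_eq_intCast_iff] at h
  obtain ⟨k, hk⟩ := h.dvd
  have hb : b = a + d * k := by linarith [hk]
  rw [hb, ze_add, ze_dvd _ ⟨k, rfl⟩, mul_one]


lemma ze_sum {ι : Type*} (s : Finset ι) (f : ι → ℤ) :
    ∏ i ∈ s, ze d (f i) = ze d (∑ i ∈ s, f i) := by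
  classical
  induction s using Finset.induction with
  | empty => simp [ze_zero]
  | insert _ _ h ih => rw [Finset.prod_insert h, Finset.sum_insert h, ze_add, ih]

lemma ze_pow (a : ℤ) (k : ℕ) : ze d a ^ k = ze d (a * k) := by
  induction k with
  | zero => simp [ze_zero]
  | succ k ih =>
    rw [pow_succ, ih, ← ze_add]
    congr 1
    push_cast
    ring

def kk (d : ℕ) : ℕ := (d^2+1)/2


lemma two_kk (hd : Odd d) : 2 * kk d = d^2+1 := by
  have : Even (d^2+1) := Odd.add_one (hd.pow)
  exact Nat.two_mul_div_two_of_even this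

lemma chi_eq (x : ZMod d) : chi d x = ze d (x.val : ℤ) := by
  unfold chi ze; norm_num

lemma tau_eq (hd : Odd d) (R : ℤ) : tau d R = ze d ((kk d : ℤ) * R) := by
  unfold tau ze
  congr 1
  have h := two_kk hd
  have hc : ((d:ℂ)^2+1) = 2 * (kk d : ℂ) := by exact_mod_cast (congrArg (Nat.cast (R := ℂ)) h).symm
  have hd0 := dC_ne (d := d)
  field_simp
  push_cast
  linear_combination (R:ℂ) * hc

lemma h2k (hd : Odd d) : (kk d : ZMod d) * 2 = 1 := by
  have h := congrArg (Nat.cast (R := ZMod d)) (two_kk hd)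
  push_cast at h
  rw [ZMod.natCast_self] at h
  rw [mul_comm]
  rw [h]
  ring

lemma intCast_val (a : ZMod d) : (((a.val : ℤ)) : ZMod d) = a := by
  push_cast
  simp [ZMod.natCast_val, ZMod.cast_id]

lemma prod_ite_sub {n : ℕ} (x y q : Fin n → ZMod d) :
    ∏ i, (if y i = x i - q i then (1:ℂ) else 0) = if y = x - q then 1 else 0 := by
  by_cases h : y = x - q
  · simp [h]
  · obtain ⟨i, hi⟩ : ∃ i, y i ≠ x i - q i := by
      by_contra hc; push_neg at hc; exact h (funext fun i => hc i)
    rw [if_neg h]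
    exact Finset.prod_eq_zero (Finset.mem_univ i) (by simp [hi])

lemma weyl_apply {n : ℕ} (hd : Odd d) (v : PhaseSpace d n) (x y : Fin n → ZMod d) :
    weyl d n v x y =
      ze d (∑ i, ((kk d : ℤ) * (-(((v.1 i).val : ℤ) * ((v.2 i).val : ℤ)))
        + (((v.1 i * x i).val : ℤ)))) * (if y = x - v.2 then 1 else 0) := by
  simp only [weyl, Matrix.of_apply, tau_eq hd, chi_eq, ← ze_add]
  rw [Finset.prod_mul_distrib, ze_sum, prod_ite_sub]
lemma weyl_mul {n : ℕ} (hd : Odd d) (v w : PhaseSpace d n) (hs : symp v w = 0) :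
    weyl d n v * weyl d n w = weyl d n (v + w) := by
  have hs' : ∑ i, v.1 i * w.2 i = ∑ i, v.2 i * w.1 i := by
    rw [symp, Finset.sum_sub_distrib, sub_eq_zero] at hs
    exact hs
  ext x y
  rw [Matrix.mul_apply]
  rw [Finset.sum_eq_single (x - v.2)]
  · rw [weyl_apply hd, weyl_apply hd, weyl_apply hd, if_pos rfl, mul_one]
    have hind : ((x - v.2) - w.2) = x - (v + w).2 := by
      rw [Prod.snd_add]; rw [sub_sub]
    rw [hind]
    by_cases hy : y = x - (v + w).2
    · simp only [if_pos hy, mul_one]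
      rw [← ze_add]
      apply ze_congr
      push_cast [ZMod.natCast_val, ZMod.cast_id]
      rw [← Finset.sum_add_distrib, ← sub_eq_zero, ← Finset.sum_sub_distrib]
      have : ∀ i ∈ Finset.univ, ((kk d : ZMod d) * -(v.1 i * v.2 i) + v.1 i * x i)
          + ((kk d : ZMod d) * -(w.1 i * w.2 i) + w.1 i * ((x - v.2) i))
          - ((kk d : ZMod d) * -((v + w).1 i * (v + w).2 i) + (v + w).1 i * x i)
          = (kk d : ZMod d) * (v.1 i * w.2 i) + ((kk d : ZMod d) - 1) * (v.2 i * w.1 i) := by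
        intro i _
        simp only [Prod.fst_add, Prod.snd_add, Pi.add_apply, Pi.sub_apply]
        ring
      rw [Finset.sum_congr rfl this, Finset.sum_add_distrib, ← Finset.mul_sum, ← Finset.mul_sum]
      linear_combination (kk d : ZMod d) * hs' + (∑ i, v.2 i * w.1 i) * h2k hd
    · simp only [if_neg hy, mul_zero]
  · intro z _ hz
    rw [weyl_apply hd, if_neg hz, mul_zero, zero_mul]
  · intro h
    exact absurd (Finset.mem_univ _) h
lemma ze_star (m : ℤ) : star (ze d m) = ze d (-m) := by
  rw [ze, ze, Complex.star_def, ← Complex.exp_conj]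
  congr 1
  simp only [map_div₀, _root_.map_mul, Complex.conj_I, Complex.conj_ofReal, map_ofNat,
    map_intCast, map_natCast, _root_.map_mul]
  push_cast
  ring

lemma weyl_star {n : ℕ} (hd : Odd d) (v : PhaseSpace d n) :
    (weyl d n v).conjTranspose = weyl d n (-v) := by
  ext x y
  rw [Matrix.conjTranspose_apply, weyl_apply hd, weyl_apply hd]
  rw [star_mul', ze_star, apply_ite (star : ℂ → ℂ), star_one, star_zero]
  have hcond : (x = y - v.2) ↔ (y = x - (-v).2) := by
    rw [show (-v).2 = -v.2 from rfl, sub_neg_eq_add, eq_sub_iff_add_eq, eq_comm]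
  by_cases h : y = x - (-v).2
  · have hy : y = x + v.2 := by rwa [show (-v).2 = -v.2 from rfl, sub_neg_eq_add] at h
    rw [if_pos (hcond.mpr h), if_pos h, mul_one, mul_one]
    apply ze_congr
    subst hy
    push_cast [ZMod.natCast_val, ZMod.cast_id]
    have hterm : ∀ i ∈ (Finset.univ : Finset (Fin n)),
        ((kk d : ZMod d) * -(v.1 i * v.2 i) + v.1 i * ((x + v.2) i))
        + ((kk d : ZMod d) * -((-v).1 i * (-v).2 i) + (-v).1 i * x i)
        = (1 - (kk d : ZMod d) * 2) * (v.1 i * v.2 i) := by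
      intro i _
      show (kk d : ZMod d) * -(v.1 i * v.2 i) + v.1 i * (x i + v.2 i)
        + ((kk d : ZMod d) * -(-(v.1 i) * -(v.2 i)) + -(v.1 i) * x i) = _
      ring
    rw [← sub_eq_zero, sub_eq_add_neg, ← neg_add, neg_eq_zero,
      ← Finset.sum_add_distrib, Finset.sum_congr rfl hterm, h2k hd]
    simp
  · rw [if_neg (fun hc => h (hcond.mp hc)), if_neg h, mul_zero, mul_zero]

lemma weyl_zero {n : ℕ} (hd : Odd d) : weyl d n (0 : PhaseSpace d n) = 1 := by
  ext x y
  rw [weyl_apply hd, Matrix.one_apply]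
  simp [ze_zero, eq_comm]

lemma char_sum {p : ZMod d} (hp : p ≠ 0) :
    ∑ t : ZMod d, ze d (((p * t).val : ℤ)) = 0 := by
  have h1 : ∀ t : ZMod d, ze d (((p * t).val : ℤ)) = (ze d (p.val : ℤ)) ^ t.val := by
    intro t
    rw [ze_pow]
    apply ze_congr
    push_cast [ZMod.natCast_val, ZMod.cast_id]
    rfl
  have hω : ze d ((p.val : ℤ)) ≠ 1 := by
    rw [Ne, ze_eq_one_iff]
    intro hdvd
    have : d ∣ p.val := Int.natCast_dvd_natCast.mp hdvd
    have hlt : p.val < d := ZMod.val_lt p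
    have hne : p.val ≠ 0 := fun hc => hp ((ZMod.val_eq_zero p).mp hc)
    exact absurd (Nat.le_of_dvd (Nat.pos_of_ne_zero hne) this) (not_le.mpr hlt)
  simp only [h1]
  rw [Finset.sum_nbij' (i := ZMod.val) (j := fun j : ℕ => (j : ZMod d))
    (t := Finset.range d) (g := fun j => ze d ((p.val : ℤ)) ^ j)
    (fun a _ => Finset.mem_range.mpr (ZMod.val_lt a))
    (fun a ha => Finset.mem_univ _)
    (fun a _ => by simp [ZMod.natCast_val, ZMod.cast_id])
    (fun a ha => ZMod.val_cast_of_lt (Finset.mem_range.mp ha))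
    (fun a _ => rfl)]
  rw [geom_sum_eq hω]
  rw [ze_pow]
  rw [ze_dvd _ ⟨p.val, by ring⟩, sub_self, zero_div]
lemma trace_weyl_zero {n : ℕ} (hd : Odd d) :
    (weyl d n (0 : PhaseSpace d n)).trace = (d:ℂ)^n := by
  rw [weyl_zero hd, Matrix.trace_one]
  simp [ZMod.card]

lemma trace_weyl_ne {n : ℕ} (hd : Odd d) {v : PhaseSpace d n} (hv : v ≠ 0) :
    (weyl d n v).trace = 0 := by
  rw [Matrix.trace]
  by_cases hq : v.2 = 0
  · have hp : v.1 ≠ 0 := fun hc => hv (Prod.ext hc hq)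
    obtain ⟨i0, hi0⟩ := Function.ne_iff.mp hp
    have hdiag : ∀ x : Fin n → ZMod d, (weyl d n v).diag x
        = ∏ i, ze d (((v.1 i * x i).val : ℤ)) := by
      intro x
      rw [Matrix.diag_apply, weyl_apply hd, if_pos (by rw [hq, sub_zero]), mul_one, ← ze_sum]
      congr 1
      funext i
      rw [hq]
      simp
    simp only [hdiag]
    rw [← Fintype.piFinset_univ,
      ← Finset.prod_univ_sum (t := fun _ : Fin n => (Finset.univ : Finset (ZMod d)))
        (f := fun i t => ze d (((v.1 i * t).val : ℤ)))]
    exact Finset.prod_eq_zero (Finset.mem_univ i0) (char_sum (by simpa using hi0))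
  · have hne : ∀ x : Fin n → ZMod d, ¬(x = x - v.2) := by
      intro x hx
      exact hq (by rwa [eq_comm, sub_eq_self] at hx)
    simp only [Matrix.diag_apply, weyl_apply hd]
    simp [hne]
variable {n : ℕ} (M : Submodule (ZMod d) (PhaseSpace d n))

lemma card_F : (Set.toFinite (M : Set (PhaseSpace d n))).toFinset.card = Nat.card ↥M := by
  have h1 : Nat.card ↥M = (M : Set (PhaseSpace d n)).ncard := Nat.card_coe_set_eq _
  rw [h1, Set.ncard_eq_toFinset_card _ (Set.toFinite _)]

lemma dpow_ne : ((d:ℂ)^n) ≠ 0 := pow_ne_zero _ (dC_ne (d := d))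

lemma stab_herm (hd : Odd d) : (stabState d n M).IsHermitian := by
  show _ = _
  rw [stabState, Matrix.conjTranspose_smul, Matrix.conjTranspose_sum]
  congr 1
  · simp [star_zpow₀, Complex.star_def, map_natCast]
  · exact Finset.sum_nbij' (i := fun m => -m) (j := fun m => -m)
      (fun a ha => (Set.Finite.mem_toFinset _).mpr
        (M.neg_mem ((Set.Finite.mem_toFinset _).mp ha)))
      (fun a ha => (Set.Finite.mem_toFinset _).mpr
        (M.neg_mem ((Set.Finite.mem_toFinset _).mp ha)))
      (fun a _ => neg_neg a) (fun a _ => neg_neg a)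
      (fun a _ => weyl_star hd a)

lemma stab_trace (hd : Odd d) : (stabState d n M).trace = 1 := by
  rw [stabState, Matrix.trace_smul, Matrix.trace_sum]
  rw [Finset.sum_eq_single_of_mem 0 ((Set.Finite.mem_toFinset _).mpr M.zero_mem)
    (fun b _ hb => trace_weyl_ne hd hb)]
  rw [trace_weyl_zero hd, smul_eq_mul, _root_.zpow_neg, zpow_natCast]
  exact inv_mul_cancel₀ (dpow_ne)

lemma stab_sq (hd : Odd d) (hM : M ≤ sympCompl M) :
    stabState d n M * stabState d n M
      = ((Nat.card ↥M : ℂ) / (d : ℂ) ^ n) • stabState d n M := by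
  rw [stabState, Matrix.smul_mul, Matrix.mul_smul, smul_smul, Finset.sum_mul_sum]
  have h2 : ∑ m ∈ (Set.toFinite (M : Set (PhaseSpace d n))).toFinset,
      ∑ m' ∈ (Set.toFinite (M : Set (PhaseSpace d n))).toFinset, weyl d n m * weyl d n m'
      = (Nat.card ↥M) • ∑ u ∈ (Set.toFinite (M : Set (PhaseSpace d n))).toFinset, weyl d n u := by
    rw [← card_F M, ← Finset.sum_const]
    refine Finset.sum_congr rfl fun m hm => ?_
    rw [Finset.sum_congr rfl (fun m' hm' => weyl_mul hd m m'
      ((hM ((Set.Finite.mem_toFinset _).mp hm)) m' ((Set.Finite.mem_toFinset _).mp hm')))]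
    exact Finset.sum_nbij' (i := fun m' => m + m') (j := fun u => u - m)
      (fun a ha => (Set.Finite.mem_toFinset _).mpr
        (M.add_mem ((Set.Finite.mem_toFinset _).mp hm) ((Set.Finite.mem_toFinset _).mp ha)))
      (fun a ha => (Set.Finite.mem_toFinset _).mpr
        (M.sub_mem ((Set.Finite.mem_toFinset _).mp ha) ((Set.Finite.mem_toFinset _).mp hm)))
      (fun a _ => add_sub_cancel_left m a) (fun a _ => by show m + (a - m) = a; rw [add_comm, sub_add_cancel])
      (fun a _ => rfl)
  rw [h2, ← Nat.cast_smul_eq_nsmul ℂ, smul_smul, smul_smul]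
  congr 1
  rw [_root_.zpow_neg, zpow_natCast]
  field_simp
lemma herm_trace {I : Type*} [Fintype I] [DecidableEq I] (A : Matrix I I ℂ)
    (hA : A.IsHermitian) : A.trace = ∑ i, (hA.eigenvalues i : ℂ) := by
  conv_lhs => rw [hA.spectral_theorem, Unitary.conjStarAlgAut_apply]
  rw [Matrix.trace_mul_cycle]
  rw [show (star (hA.eigenvectorUnitary : Matrix I I ℂ)) * (hA.eigenvectorUnitary : Matrix I I ℂ)
    = 1 from Unitary.coe_star_mul_self _, Matrix.one_mul, Matrix.trace_diagonal]
  rfl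


theorem stmt4 (d n : ℕ) [NeZero d] (hd : Odd d) (hn : 1 ≤ n)
    (M : Submodule (ZMod d) (PhaseSpace d n)) (hM : M ≤ sympCompl M) :
    (stabState d n M).IsHermitian ∧
    (stabState d n M).PosSemidef ∧
    (stabState d n M).trace = 1 ∧
    stabState d n M * stabState d n M
      = ((Nat.card ↥M : ℂ) / (d : ℂ) ^ n) • stabState d n M ∧
    (stabState d n M).rank * Nat.card ↥M = d ^ n := by
  classical
  have hH := stab_herm M hd
  have hsq := stab_sq M hd hM
  have htr := stab_trace M hd
  set c : ℂ := (Nat.card ↥M : ℂ) / (d:ℂ)^n with hc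
  have hcard_pos : 0 < Nat.card ↥M := Nat.card_pos
  have hc_ne : c ≠ 0 := div_ne_zero (Nat.cast_ne_zero.2 hcard_pos.ne') dpow_ne
  have hc_real : c = (((Nat.card ↥M : ℝ) / (d:ℝ)^n : ℝ) : ℂ) := by
    rw [hc]; push_cast; ring
  -- PSD
  have hrepr : stabState d n M = c⁻¹ • ((stabState d n M).conjTranspose * stabState d n M) := by
    rw [show (stabState d n M).conjTranspose = stabState d n M from hH, hsq, smul_smul,
      inv_mul_cancel₀ hc_ne, one_smul]
  have hpsd : (stabState d n M).PosSemidef := by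
    refine Matrix.posSemidef_iff_dotProduct_mulVec.mpr ⟨hH, fun x => ?_⟩
    rw [hrepr, Matrix.smul_mulVec]
    have hB := Matrix.posSemidef_conjTranspose_mul_self (stabState d n M)
    have h0 : (0:ℂ) ≤ c⁻¹ := by
      rw [hc_real, ← Complex.ofReal_inv]
      rw [Complex.zero_le_real]
      positivity
    calc (0:ℂ) ≤ c⁻¹ * (dotProduct (star x)
        (((stabState d n M).conjTranspose * stabState d n M) *ᵥ x)) :=
          mul_nonneg h0 ((Matrix.posSemidef_iff_dotProduct_mulVec.mp hB).2 x)
      _ = _ := by rw [dotProduct_smul]; rfl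
  -- eigenvalue dichotomy
  have hev : ∀ i, (hH.eigenvalues i : ℂ) = 0 ∨ (hH.eigenvalues i : ℂ) = c := by
    intro i
    have hv0 := hH.mulVec_eigenvectorBasis i
    set v := ⇑(hH.eigenvectorBasis i) with hvdef
    have hv' : stabState d n M *ᵥ v = ((hH.eigenvalues i : ℂ)) • v := by
      rw [hv0]; ext j; simp [Complex.real_smul]
    have hvne : v ≠ 0 := by
      intro h0
      have h1 := hH.eigenvectorBasis.orthonormal.1 i
      have h2 : hH.eigenvectorBasis i = 0 := by
        ext j; exact congrFun h0 j
      rw [h2] at h1; simp at h1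
    have h2 : (stabState d n M * stabState d n M) *ᵥ v
        = ((hH.eigenvalues i : ℂ) * (hH.eigenvalues i : ℂ)) • v := by
      rw [← Matrix.mulVec_mulVec, hv', Matrix.mulVec_smul, hv', smul_smul]
    have h3 : (stabState d n M * stabState d n M) *ᵥ v
        = (c * (hH.eigenvalues i : ℂ)) • v := by
      rw [hsq, Matrix.smul_mulVec, hv', smul_smul]
    have h4 : (((hH.eigenvalues i : ℂ)) * (hH.eigenvalues i : ℂ)
        - c * (hH.eigenvalues i : ℂ)) • v = 0 := by
      rw [sub_smul, ← h2, ← h3, sub_self]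
    rcases smul_eq_zero.mp h4 with h | h
    · have h5 : ((hH.eigenvalues i : ℂ)) * ((hH.eigenvalues i : ℂ) - c) = 0 := by
        linear_combination h
      rcases mul_eq_zero.mp h5 with h6 | h6
      · exact Or.inl h6
      · exact Or.inr (by linear_combination h6)
    · exact absurd h hvne
  -- trace = card * c
  have htr2 : (1:ℂ) = (Fintype.card {i // hH.eigenvalues i ≠ 0} : ℂ) * c := by
    rw [← htr, herm_trace _ hH]
    calc ∑ i, (hH.eigenvalues i : ℂ)
        = ∑ i, (if hH.eigenvalues i ≠ 0 then c else 0) := by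
          refine Finset.sum_congr rfl fun i _ => ?_
          by_cases h : hH.eigenvalues i = 0
          · simp [h]
          · rw [if_pos h]
            exact (hev i).resolve_left (by exact_mod_cast h)
      _ = ((Finset.univ.filter (fun i => hH.eigenvalues i ≠ 0)).card : ℂ) * c := by
          rw [Finset.sum_ite, Finset.sum_const, Finset.sum_const_zero, add_zero, nsmul_eq_mul]
      _ = _ := by rw [Fintype.card_subtype]
  have hrank : (stabState d n M).rank = Fintype.card {i // hH.eigenvalues i ≠ 0} :=
    hH.rank_eq_card_non_zero_eigs
  have hfinal : (stabState d n M).rank * Nat.card ↥M = d ^ n := by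
    have h7 : ((Fintype.card {i // hH.eigenvalues i ≠ 0} * Nat.card ↥M : ℕ) : ℂ)
        = ((d^n : ℕ) : ℂ) := by
      have h9 := htr2
      rw [hc, ← mul_div_assoc, eq_comm, div_eq_one_iff_eq dpow_ne] at h9
      push_cast
      exact h9
    rw [hrank]
    exact_mod_cast h7
  exact ⟨hH, hpsd, htr, hsq, hfinal⟩
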